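/- Let x = [x_{ij}] be a 4×4 complex matrix satisfying x^T Ψ x = Φ (with Ψ, Φ as usual), x21 ≠ 0 and x11x22 - x12x21 ≠ 0. Then there exists a unique upper triangular matrix g with g^T Φ g = Φ such that the product xg has the form [[τ0,1,0,0],[1,0,0,0],[τ1,τ3,1,0],[τ2, -τ0τ3+τ1, -τ0, 1]] for some complex numbers τ0, τ1, τ2, τ3. -/

import Mathlib

open Matrix

def Psi : Matrix (Fin 4) (Fin 4) ℂ :=
  !![0,0,1,0; 0,0,0,1; -1,0,0,0; 0,-1,0,0]

def Phi : Matrix (Fin 4) (Fin 4) ℂ :=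
  !![0,0,0,1; 0,0,1,0; 0,-1,0,0; -1,0,0,0]

/-- The normalized period matrix with parameters τ₀, τ₁, τ₂, τ₃. -/
def N (τ0 τ1 τ2 τ3 : ℂ) : Matrix (Fin 4) (Fin 4) ℂ :=
  !![τ0, 1, 0, 0;
     1, 0, 0, 0;
     τ1, τ3, 1, 0;
     τ2, -τ0*τ3+τ1, -τ0, 1]

lemma N_transpose (a b c d : ℂ) :
    (N a b c d)ᵀ = !![a,1,b,c; 1,0,d,-a*d+b; 0,0,1,-a; 0,0,0,1] := by
  ext i j
  fin_cases i <;> fin_cases j <;>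
    simp [N, Matrix.vecHead, Matrix.vecTail]

set_option maxHeartbeats 1000000 in
lemma N_symp (a b c d : ℂ) : (N a b c d)ᵀ * Psi * N a b c d = Phi := by
  have h1 : (N a b c d)ᵀ * Psi = !![-b,-c,a,1; -d,a*d-b,1,0; -1,a,0,0; 0,-1,0,0] := by
    rw [N_transpose]
    ext i j
    fin_cases i <;> fin_cases j <;>
      (simp [Psi, Matrix.mul_apply, Fin.sum_univ_four, Matrix.vecHead, Matrix.vecTail];
       try ring)
  rw [h1]
  ext i j
  fin_cases i <;> fin_cases j <;>
    (simp [N, Phi, Matrix.mul_apply, Fin.sum_univ_four, Matrix.vecHead, Matrix.vecTail];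
     try ring)

lemma Phi_mul_Phi : Phi * Phi = -1 := by
  ext i j
  fin_cases i <;> fin_cases j <;>
    simp [Phi, Matrix.mul_apply, Fin.sum_univ_four, Matrix.one_apply, Matrix.neg_apply,
      Matrix.vecHead, Matrix.vecTail]

set_option maxHeartbeats 2000000 in
theorem stmt8 (x : Matrix (Fin 4) (Fin 4) ℂ) (h : xᵀ * Psi * x = Phi)
    (h21 : x 1 0 ≠ 0) (hd : x 0 0 * x 1 1 - x 0 1 * x 1 0 ≠ 0) :
    ∃! g : Matrix (Fin 4) (Fin 4) ℂ,
      (∀ i j : Fin 4, j < i → g i j = 0) ∧ gᵀ * Phi * g = Phi ∧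
      ∃ τ0 τ1 τ2 τ3 : ℂ, x * g = N τ0 τ1 τ2 τ3 := by
  have hKx : ((-Phi) * xᵀ * Psi) * x = 1 := by
    have e : ((-Phi) * xᵀ * Psi) * x = (-Phi) * (xᵀ * Psi * x) := by
      simp [Matrix.mul_assoc]
    rw [e, h, Matrix.neg_mul, Phi_mul_Phi, neg_neg]
  have hxK : x * ((-Phi) * xᵀ * Psi) = 1 := mul_eq_one_comm.mp hKx
  set K := (-Phi) * xᵀ * Psi with hK
  have hKe : K = !![x 2 3, x 3 3, -(x 0 3), -(x 1 3);
         x 2 2, x 3 2, -(x 0 2), -(x 1 2);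
         -(x 2 1), -(x 3 1), x 0 1, x 1 1;
         -(x 2 0), -(x 3 0), x 0 0, x 1 0] := by
    rw [hK]
    ext i j
    fin_cases i <;> fin_cases j <;>
      simp [Phi, Psi, Matrix.mul_apply, Fin.sum_univ_four, Matrix.transpose_apply,
        Matrix.neg_apply, Matrix.vecHead, Matrix.vecTail, Matrix.vecMul, dotProduct]
  have r01 := Matrix.ext_iff.2 h 0 1
  have r02 := Matrix.ext_iff.2 h 0 2
  simp [Matrix.mul_apply, Fin.sum_univ_four, Psi, Phi, Matrix.transpose_apply,
    Matrix.vecHead, Matrix.vecTail] at r01 r02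
  set t0 := x 0 0 / x 1 0 with ht0
  set t1 := x 2 0 / x 1 0 with ht1
  set t2 := x 3 0 / x 1 0 with ht2
  set t3 := (x 1 1 * x 2 0 - x 1 0 * x 2 1) / (x 0 0 * x 1 1 - x 0 1 * x 1 0) with ht3
  have hxg : x * (K * N t0 t1 t2 t3) = N t0 t1 t2 t3 := by
    rw [← Matrix.mul_assoc, hxK, Matrix.one_mul]
  refine ⟨K * N t0 t1 t2 t3, ⟨?_, ?_, t0, t1, t2, t3, hxg⟩, ?_⟩
  · -- upper triangular
    have L10 : (K * N t0 t1 t2 t3) 1 0 = 0 := by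
      simp [hKe, N, Matrix.mul_apply, Fin.sum_univ_four, Matrix.vecHead, Matrix.vecTail,
        ht0, ht1, ht2, ht3]
      (try field_simp)
      linear_combination r02
    have L20 : (K * N t0 t1 t2 t3) 2 0 = 0 := by
      simp [hKe, N, Matrix.mul_apply, Fin.sum_univ_four, Matrix.vecHead, Matrix.vecTail,
        ht0, ht1, ht2, ht3]
      (try field_simp)
      linear_combination -r01
    have L30 : (K * N t0 t1 t2 t3) 3 0 = 0 := by
      simp [hKe, N, Matrix.mul_apply, Fin.sum_univ_four, Matrix.vecHead, Matrix.vecTail,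
        ht0, ht1, ht2, ht3]
      (try field_simp)
      (try ring)
    have L21 : (K * N t0 t1 t2 t3) 2 1 = 0 := by
      simp [hKe, N, Matrix.mul_apply, Fin.sum_univ_four, Matrix.vecHead, Matrix.vecTail,
        ht0, ht1, ht2, ht3]
      (try field_simp)
      linear_combination (x 1 0 * x 2 1 - x 1 1 * x 2 0) * mul_inv_cancel₀ (show -(x 1 0 * x 0 1) + x 1 1 * x 0 0 ≠ 0 from fun h' => hd (by linear_combination h'))
      (try ring)
    have L31 : (K * N t0 t1 t2 t3) 3 1 = 0 := by
      simp [hKe, N, Matrix.mul_apply, Fin.sum_univ_four, Matrix.vecHead, Matrix.vecTail,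
        ht0, ht1, ht2, ht3]
      (try field_simp)
      (try ring)
    have L32 : (K * N t0 t1 t2 t3) 3 2 = 0 := by
      simp [hKe, N, Matrix.mul_apply, Fin.sum_univ_four, Matrix.vecHead, Matrix.vecTail,
        ht0, ht1, ht2, ht3]
      (try field_simp)
      (try ring)
    intro i j hij
    fin_cases i <;> fin_cases j <;>
      first
      | exact absurd hij (by decide)
      | exact L10
      | exact L20
      | exact L30
      | exact L21
      | exact L31
      | exact L32
  · -- symplectic
    calc (K * N t0 t1 t2 t3)ᵀ * Phi * (K * N t0 t1 t2 t3)
        = (K * N t0 t1 t2 t3)ᵀ * (xᵀ * Psi * x) * (K * N t0 t1 t2 t3) := by rw [h]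
      _ = (x * (K * N t0 t1 t2 t3))ᵀ * Psi * (x * (K * N t0 t1 t2 t3)) := by
          simp [Matrix.transpose_mul, Matrix.mul_assoc]
      _ = Phi := by rw [hxg, N_symp]
  · rintro g' ⟨hlow, hsymp, s0, s1, s2, s3, hx'⟩
    have z10 : g' 1 0 = 0 := hlow 1 0 (by decide)
    have z20 : g' 2 0 = 0 := hlow 2 0 (by decide)
    have z30 : g' 3 0 = 0 := hlow 3 0 (by decide)
    have z21 : g' 2 1 = 0 := hlow 2 1 (by decide)
    have z31 : g' 3 1 = 0 := hlow 3 1 (by decide)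
    have E00 := Matrix.ext_iff.2 hx' 0 0
    have E10 := Matrix.ext_iff.2 hx' 1 0
    have E20 := Matrix.ext_iff.2 hx' 2 0
    have E30 := Matrix.ext_iff.2 hx' 3 0
    have E01 := Matrix.ext_iff.2 hx' 0 1
    have E11 := Matrix.ext_iff.2 hx' 1 1
    have E21 := Matrix.ext_iff.2 hx' 2 1
    simp [Matrix.mul_apply, Fin.sum_univ_four, N, z10, z20, z30, z21, z31,
      Matrix.vecHead, Matrix.vecTail] at E00 E10 E20 E30 E01 E11 E21
    have hs0 : s0 = t0 := by
      rw [← E00, ht0]; field_simp; linear_combination x 0 0 * E10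
    have hs1 : s1 = t1 := by
      rw [← E20, ht1]; field_simp; linear_combination x 2 0 * E10
    have hs2 : s2 = t2 := by
      rw [← E30, ht2]; field_simp; linear_combination x 3 0 * E10
    have hg1 : (x 0 0 * x 1 1 - x 0 1 * x 1 0) * g' 0 1 = x 1 1 := by
      linear_combination x 1 1 * E01 - x 0 1 * E11
    have hg2 : (x 0 0 * x 1 1 - x 0 1 * x 1 0) * g' 1 1 = -(x 1 0) := by
      linear_combination x 0 0 * E11 - x 1 0 * E01
    have hs3 : s3 = t3 := by
      rw [← E21, ht3, eq_div_iff hd]; linear_combination x 2 0 * hg1 + x 2 1 * hg2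
    calc g' = (K * x) * g' := by rw [hKx, Matrix.one_mul]
      _ = K * (x * g') := Matrix.mul_assoc _ _ _
      _ = K * N t0 t1 t2 t3 := by rw [hx', hs0, hs1, hs2, hs3]
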